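/- arXiv:2503.09909 — 2 statements merged into one kernel-verified Lean document; each statement's English description precedes it below -/
import Mathlib

section
/- Let n ≥ 1 and let a₁, a₂, a₃ ∈ ℤ[X_{n-1}]. If the purely periodic continued fraction [a₁, a₂, a₃, a₁, a₂, a₃, …] (i.e. the sequence c with c_{3k} = a₁, c_{3k+1} = a₂, c_{3k+2} = a₃ for all k ≥ 0) converges to X_n, then a₂² − X_n²·(a₂·a₃ + 1)² = −1, a₁·a₂ + 1 = X_n²·(a₂·a₃ + 1), and a₂·(a₂·a₃ + 1) > 0. (Equivalently, ε = a₂ + X_n·(a₂a₃+1) lies in RE_n⁻ with p(ε) = a₂ dividing both q(ε) − 1 and X_n²·q(ε) − 1, and sgn(p(ε)q(ε)) = 1.) -/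
set_option maxHeartbeats 1000000
set_option synthInstance.maxHeartbeats 400000



/-- `X n = 2 cos(2π/2^(n+2))`. -/
noncomputable def X (n : ℕ) : ℝ := 2 * Real.cos (2 * Real.pi / 2 ^ (n + 2))

/-- Convergent numerators: `cfNum c (k+1) = p_k`, with `cfNum c 0 = p_{-1} = 1`. -/
noncomputable def cfNum (c : ℕ → ℝ) : ℕ → ℝ
  | 0 => 1
  | 1 => c 0
  | (k + 2) => c (k + 1) * cfNum c (k + 1) + cfNum c k

/-- Convergent denominators: `cfDen c (k+1) = q_k`, with `cfDen c 0 = q_{-1} = 0`. -/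
noncomputable def cfDen (c : ℕ → ℝ) : ℕ → ℝ
  | 0 => 0
  | 1 => 1
  | (k + 2) => c (k + 1) * cfDen c (k + 1) + cfDen c k

/-- The continued fraction `[c₀, c₁, c₂, …]` converges to `x`. -/
def CFConv (c : ℕ → ℝ) (x : ℝ) : Prop :=
  Filter.Tendsto (fun k => cfNum c (k + 1) / cfDen c (k + 1)) Filter.atTop (nhds x)


lemma X_sq (n : ℕ) : X (n+1) ^ 2 = 2 + X n := by
  unfold X
  have h : (2:ℝ) * (2 * Real.pi / 2 ^ (n + 3)) = 2 * Real.pi / 2 ^ (n + 2) := by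
    rw [pow_succ]; ring
  rw [show n+1+2 = n+3 from rfl, ← h, Real.cos_two_mul]
  ring

lemma X_pos (n : ℕ) : 0 < X (n+1) := by
  unfold X
  have h2 : (0:ℝ) < 2 * Real.pi / 2 ^ (n + 3) := by positivity
  have h3 : 2 * Real.pi / 2 ^ (n + 3) < Real.pi / 2 := by
    rw [div_lt_div_iff₀ (by positivity) (by norm_num)]
    have : (8:ℝ) ≤ 2 ^ (n+3) := by
      calc (8:ℝ) = 2^3 := by norm_num
      _ ≤ 2^(n+3) := by apply pow_le_pow_right₀ (by norm_num); omega
    nlinarith [Real.pi_pos]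
  have := Real.cos_pos_of_mem_Ioo (show 2 * Real.pi / 2 ^ (n + 3) ∈ Set.Ioo (-(Real.pi/2)) (Real.pi/2) from ⟨by nlinarith [Real.pi_pos], h3⟩)
  positivity


open Polynomial in
noncomputable def Pchain : ℕ → Polynomial ℚ
  | 0 => Polynomial.X
  | (m+1) => (Pchain m).comp (Polynomial.X^2 - Polynomial.C 2)

open Polynomial in
lemma Pchain_monic (m : ℕ) : (Pchain m).Monic := by
  induction m with
  | zero => exact monic_X
  | succ m ih =>
    exact ih.comp (monic_X_pow_sub_C 2 (by norm_num)) (by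
      rw [natDegree_X_pow_sub_C]; norm_num)

open Polynomial in
lemma Pchain_deg (m : ℕ) : (Pchain m).natDegree = 2^m := by
  induction m with
  | zero => simp [Pchain]
  | succ m ih =>
    show ((Pchain m).comp _).natDegree = _
    rw [natDegree_comp, ih, natDegree_X_pow_sub_C]
    ring

lemma Pchain_aeval (m : ℕ) : Polynomial.aeval (X m) (Pchain m) = 0 := by
  induction m with
  | zero =>
    simp [Pchain, X]
    rw [show 2 * Real.pi / 2^(0+2) = Real.pi/2 by norm_num; ring]
    simp [Real.cos_pi_div_two]
  | succ m ih =>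
    show Polynomial.aeval (X (m+1)) ((Pchain m).comp _) = 0
    rw [Polynomial.aeval_comp]
    have : (Polynomial.aeval (X (m+1))) (Polynomial.X^2 - Polynomial.C (2:ℚ)) = X m := by
      simp; have := X_sq m; linarith
    rw [this, ih]

lemma X_integral (m : ℕ) : IsIntegral ℚ (X m) :=
  ⟨Pchain m, Pchain_monic m, by rw [← Polynomial.aeval_def]; exact Pchain_aeval m⟩

lemma minpoly_X_le (m : ℕ) : (minpoly ℚ (X m)).natDegree ≤ 2^m := by
  have h := minpoly.degree_le_of_ne_zero ℚ (X m) (Pchain_monic m).ne_zero (by simpa using Pchain_aeval m)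
  have := Polynomial.natDegree_le_natDegree h
  rwa [Pchain_deg m] at this


open IntermediateField in
lemma minpoly_X_ge (n : ℕ) : 2^n ≤ (minpoly ℚ (X n)).natDegree := by
  set N : ℕ := 2^(n+2) with hN
  have hN0 : (N:ℂ) ≠ 0 := Nat.cast_ne_zero.mpr (by positivity)
  set ζ : ℂ := Complex.exp (2 * Real.pi * Complex.I / N) with hζ
  have hprim : IsPrimitiveRoot ζ N := Complex.isPrimitiveRoot_exp N (by rw [hN]; positivity)
  have hζ0 : ζ ≠ 0 := Complex.exp_ne_zero _
  -- y = ζ + ζ⁻¹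
  set y : ℂ := ((X n : ℝ) : ℂ) with hy
  have hyζ : y = ζ + ζ⁻¹ := by
    rw [hy, show X n = 2 * Real.cos (2 * Real.pi / 2 ^ (n + 2)) from rfl]
    push_cast
    rw [show Complex.cos (2 * (Real.pi:ℂ) / 2^(n+2)) = (Complex.exp ((2 * (Real.pi:ℂ) / 2^(n+2)) * Complex.I) + Complex.exp (-(2 * (Real.pi:ℂ) / 2^(n+2)) * Complex.I))/2 from rfl]
    rw [hζ, ← Complex.exp_neg]
    have harg : ((2:ℂ) * Real.pi / 2^(n+2)) * Complex.I = 2 * Real.pi * Complex.I / N := by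
      rw [hN]; push_cast; ring
    rw [← harg, neg_mul]
    ring
  -- y is integral over ℚ
  have hyint : IsIntegral ℚ y := (X_integral n).map (algebraMap ℝ ℂ).toRatAlgHom
  -- K = ℚ(y)
  set K : IntermediateField ℚ ℂ := IntermediateField.adjoin ℚ {y} with hK
  have hyK : y ∈ K := IntermediateField.mem_adjoin_simple_self ℚ y
  haveI : FiniteDimensional ℚ K := IntermediateField.adjoin.finiteDimensional hyint
  -- ζ is a root of a monic quadratic over K
  set p : Polynomial K := Polynomial.X^2 + (Polynomial.C (-(⟨y, hyK⟩ : K)) * Polynomial.X + 1) with hp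
  have hpm : p.Monic := by
    rw [hp]; monicity!
  have hpdeg : p.natDegree = 2 := by
    rw [hp]; compute_degree!
  have hpζ : Polynomial.aeval ζ p = 0 := by
    rw [hp]
    simp only [map_add, map_mul, map_pow, Polynomial.aeval_X, Polynomial.aeval_C, map_one, map_neg]
    have : (algebraMap K ℂ) (⟨y, hyK⟩ : K) = y := rfl
    rw [this, hyζ]
    field_simp
    ring
  have hζKint : IsIntegral K ζ := ⟨p, hpm, hpζ⟩
  haveI : FiniteDimensional K (IntermediateField.adjoin K {ζ}) :=
    IntermediateField.adjoin.finiteDimensional hζKint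
  have h2 : Module.finrank K (IntermediateField.adjoin K {ζ}) ≤ 2 := by
    rw [IntermediateField.adjoin.finrank hζKint]
    have := Polynomial.natDegree_le_natDegree
      (minpoly.degree_le_of_ne_zero K ζ hpm.ne_zero hpζ)
    rw [hpdeg] at this
    exact this
  -- ℚ(ζ) has dimension 2^(n+1)
  have hζQint : IsIntegral ℚ ζ := (hprim.isIntegral (by positivity)).tower_top
  haveI : FiniteDimensional ℚ (IntermediateField.adjoin ℚ ({ζ} : Set ℂ)) :=
    IntermediateField.adjoin.finiteDimensional hζQint
  have hQζ : Module.finrank ℚ (IntermediateField.adjoin ℚ ({ζ} : Set ℂ)) = 2^(n+1) := by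
    rw [IntermediateField.adjoin.finrank hζQint,
      ← Polynomial.cyclotomic_eq_minpoly_rat hprim (by positivity),
      Polynomial.natDegree_cyclotomic, hN,
      Nat.totient_prime_pow Nat.prime_two (by omega)]
    simp
  -- tower
  haveI : FiniteDimensional ℚ (IntermediateField.adjoin K ({ζ} : Set ℂ)) :=
    FiniteDimensional.trans ℚ K _
  have htower : Module.finrank ℚ K * Module.finrank K (IntermediateField.adjoin K ({ζ} : Set ℂ))
      = Module.finrank ℚ (IntermediateField.adjoin K ({ζ} : Set ℂ)) :=
    Module.finrank_mul_finrank ℚ K _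
  have hle : IntermediateField.adjoin ℚ ({ζ} : Set ℂ)
      ≤ (IntermediateField.adjoin K ({ζ} : Set ℂ)).restrictScalars ℚ := by
    rw [IntermediateField.adjoin_le_iff]
    intro z hz
    rcases hz with rfl
    exact IntermediateField.mem_adjoin_simple_self K ζ
  have hmono : Module.finrank ℚ (IntermediateField.adjoin ℚ ({ζ} : Set ℂ))
      ≤ Module.finrank ℚ ((IntermediateField.adjoin K ({ζ} : Set ℂ)).restrictScalars ℚ) := by
    have : Module.Finite ℚ (Subalgebra.toSubmodule ((IntermediateField.adjoin K ({ζ} : Set ℂ)).restrictScalars ℚ).toSubalgebra) :=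
      (inferInstance : FiniteDimensional ℚ (IntermediateField.adjoin K ({ζ} : Set ℂ)))
    exact Submodule.finrank_mono (show (IntermediateField.adjoin ℚ ({ζ} : Set ℂ)).toSubmodule ≤ ((IntermediateField.adjoin K ({ζ} : Set ℂ)).restrictScalars ℚ).toSubmodule from hle)
  have hrs : Module.finrank ℚ ((IntermediateField.adjoin K ({ζ} : Set ℂ)).restrictScalars ℚ)
      = Module.finrank ℚ (IntermediateField.adjoin K ({ζ} : Set ℂ)) := rfl
  -- finrank ℚ K = natDegree of minpoly of X n
  have hKfin : Module.finrank ℚ K = (minpoly ℚ (X n)).natDegree := by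
    rw [hK, IntermediateField.adjoin.finrank hyint]
    congr 1
    rw [hy]
    exact minpoly.algebraMap_eq Complex.ofReal_injective (X n)
  have : 2^(n+1) ≤ (minpoly ℚ (X n)).natDegree * 2 := by
    calc 2^(n+1) = Module.finrank ℚ (IntermediateField.adjoin ℚ ({ζ} : Set ℂ)) := hQζ.symm
      _ ≤ Module.finrank ℚ (IntermediateField.adjoin K ({ζ} : Set ℂ)) := by rw [← hrs]; exact hmono
      _ = Module.finrank ℚ K * Module.finrank K (IntermediateField.adjoin K ({ζ} : Set ℂ)) := htower.symm
      _ ≤ Module.finrank ℚ K * 2 := Nat.mul_le_mul_left _ h2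
      _ = (minpoly ℚ (X n)).natDegree * 2 := by rw [hKfin]
  have hpow : (2:ℕ)^(n+1) = 2^n * 2 := by ring
  omega


lemma irr_aux {x y : ℝ} (hx : IsIntegral ℚ x) (hy : IsIntegral ℚ y)
    (hdeg : (minpoly ℚ y).natDegree < (minpoly ℚ x).natDegree)
    {r s : ℝ} (hr : r ∈ Algebra.adjoin ℤ ({y} : Set ℝ))
    (hs : s ∈ Algebra.adjoin ℤ ({y} : Set ℝ)) (h : r * x = s) :
    r = 0 ∧ s = 0 := by
  have hr0 : r = 0 := by
    by_contra hr0
    set F : IntermediateField ℚ ℝ := IntermediateField.adjoin ℚ {y} with hF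
    haveI : FiniteDimensional ℚ F := IntermediateField.adjoin.finiteDimensional hy
    have hsub : Algebra.adjoin ℤ ({y} : Set ℝ) ≤ Subalgebra.restrictScalars ℤ F.toSubalgebra := by
      rw [Algebra.adjoin_le_iff]
      intro z hz
      rcases hz with rfl
      exact IntermediateField.mem_adjoin_simple_self ℚ z
    have hmem : ∀ z : ℝ, z ∈ Algebra.adjoin ℤ ({y} : Set ℝ) → z ∈ F := by
      intro z hz
      have := hsub hz
      rwa [Subalgebra.mem_restrictScalars, IntermediateField.mem_toSubalgebra] at this
    have hrF : r ∈ F := hmem r hr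
    have hsF : s ∈ F := hmem s hs
    have hxF : x ∈ F := by
      have hxe : x = s / r := by field_simp; linarith [h]
      rw [hxe]
      exact div_mem hsF hrF
    have hle : IntermediateField.adjoin ℚ {x} ≤ F := by
      rw [IntermediateField.adjoin_le_iff]
      intro z hz; rcases hz with rfl; exact hxF
    haveI : FiniteDimensional ℚ (IntermediateField.adjoin ℚ ({x} : Set ℝ)) :=
      IntermediateField.adjoin.finiteDimensional hx
    have h1 : Module.finrank ℚ (IntermediateField.adjoin ℚ ({x} : Set ℝ)) ≤ Module.finrank ℚ F := by
      have : Module.Finite ℚ (Subalgebra.toSubmodule F.toSubalgebra) :=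
        (inferInstance : FiniteDimensional ℚ F)
      exact Submodule.finrank_mono (show (IntermediateField.adjoin ℚ ({x} : Set ℝ)).toSubmodule ≤ F.toSubmodule from hle)
    rw [IntermediateField.adjoin.finrank hx, hF,
      IntermediateField.adjoin.finrank hy] at h1
    omega
  exact ⟨hr0, by rw [← h, hr0, zero_mul]⟩

lemma c_period {a₁ a₂ a₃ : ℝ} {c : ℕ → ℝ} (hc1 : ∀ k, c (3 * k) = a₁)
    (hc2 : ∀ k, c (3 * k + 1) = a₂) (hc3 : ∀ k, c (3 * k + 2) = a₃) (k : ℕ) :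
    c (k + 3) = c k := by
  have h : k % 3 = 0 ∨ k % 3 = 1 ∨ k % 3 = 2 := by omega
  rcases h with h | h | h
  · obtain ⟨j, rfl⟩ : ∃ j, k = 3 * j := ⟨k / 3, by omega⟩
    rw [show 3 * j + 3 = 3 * (j + 1) by ring, hc1, hc1]
  · obtain ⟨j, rfl⟩ : ∃ j, k = 3 * j + 1 := ⟨k / 3, by omega⟩
    rw [show 3 * j + 1 + 3 = 3 * (j + 1) + 1 by ring, hc2, hc2]
  · obtain ⟨j, rfl⟩ : ∃ j, k = 3 * j + 2 := ⟨k / 3, by omega⟩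
    rw [show 3 * j + 2 + 3 = 3 * (j + 1) + 2 by ring, hc3, hc3]

lemma cf_step {a₁ a₂ a₃ : ℝ} {c : ℕ → ℝ} (hc1 : ∀ k, c (3 * k) = a₁)
    (hc2 : ∀ k, c (3 * k + 1) = a₂) (hc3 : ∀ k, c (3 * k + 2) = a₃) (k : ℕ) :
    cfNum c (k + 3) = (a₃ * (a₁ * a₂ + 1) + a₁) * cfNum c k + (a₁ * a₂ + 1) * cfDen c k ∧
      cfDen c (k + 3) = (a₂ * a₃ + 1) * cfNum c k + a₂ * cfDen c k := by
  have hc0' : c 0 = a₁ := by simpa using hc1 0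
  have hc1' : c 1 = a₂ := by simpa using hc2 0
  have hc2' : c 2 = a₃ := by simpa using hc3 0
  have hc3' : c 3 = a₁ := by simpa using hc1 1
  induction k using Nat.strong_induction_on with
  | _ k ih =>
    match k with
    | 0 =>
      constructor
      · show c 2 * (c 1 * c 0 + 1) + c 0 = _ * 1 + _ * 0
        rw [hc0', hc1', hc2']; ring
      · show c 2 * (c 1 * 1 + 0) + 1 = _ * 1 + _ * 0
        rw [hc1', hc2']; ring
    | 1 =>
      constructor
      · show c 3 * (c 2 * (c 1 * c 0 + 1) + c 0) + (c 1 * c 0 + 1) = _ * c 0 + _ * 1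
        rw [hc0', hc1', hc2', hc3']; ring
      · show c 3 * (c 2 * (c 1 * 1 + 0) + 1) + (c 1 * 1 + 0) = _ * c 0 + _ * 1
        rw [hc0', hc1', hc2', hc3']; ring
    | (k + 2) =>
      obtain ⟨ih1N, ih1D⟩ := ih (k + 1) (by omega)
      obtain ⟨ih0N, ih0D⟩ := ih k (by omega)
      have hcp := c_period hc1 hc2 hc3 (k + 1)
      constructor
      · show c (k + 4) * cfNum c (k + 4) + cfNum c (k + 3) = _
        rw [show k + 4 = (k + 1) + 3 from rfl, hcp, ih1N, ih0N,
          show cfNum c (k + 2) = c (k + 1) * cfNum c (k + 1) + cfNum c k from rfl,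
          show cfDen c (k + 2) = c (k + 1) * cfDen c (k + 1) + cfDen c k from rfl]
        ring
      · show c (k + 4) * cfDen c (k + 4) + cfDen c (k + 3) = _
        rw [show k + 4 = (k + 1) + 3 from rfl, hcp, ih1D, ih0D,
          show cfNum c (k + 2) = c (k + 1) * cfNum c (k + 1) + cfNum c k from rfl,
          show cfDen c (k + 2) = c (k + 1) * cfDen c (k + 1) + cfDen c k from rfl]
        ring

open Filter Topology

lemma dynQ {x p1 p2 q1 q2 : ℝ} {A B : ℕ → ℝ}
    (hA : ∀ k, A (k+1) = p2 * A k + p1 * B k)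
    (hB : ∀ k, B (k+1) = q2 * A k + q1 * B k)
    (hconv : Tendsto (fun k => A k / B k) atTop (nhds x))
    (hxpos : 0 < x) :
    q2 * x^2 + (q1 - p2) * x - p1 = 0 := by
  set w : ℕ → ℝ := fun k => A k - x * B k with hw
  set Q := q2 * x^2 + (q1 - p2) * x - p1 with hQ
  set lam := q2 * x + q1 with hlam
  have hBne : ∀ᶠ k in atTop, B k ≠ 0 := by
    filter_upwards [hconv.eventually (eventually_gt_nhds (half_lt_self hxpos))] with k hk
    intro h0
    rw [h0, div_zero] at hk
    linarith
  have ht0 : Tendsto (fun k => w k / B k) atTop (nhds 0) := by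
    have he : (fun k => w k / B k) =ᶠ[atTop] fun k => A k / B k - x := by
      filter_upwards [hBne] with k hk
      simp only [hw]
      field_simp
    rw [tendsto_congr' he]
    simpa using hconv.sub_const x
  have hwstep : ∀ k, w (k+1) = (p2 - x*q2) * w k - Q * B k := by
    intro k; simp only [hw]; rw [hA k, hB k]; simp only [hQ]; ring
  have l1 : Tendsto (fun k => w (k+1) / B k) atTop (nhds (-Q)) := by
    have he : (fun k => w (k+1)/B k) =ᶠ[atTop] fun k => (p2 - x*q2) * (w k / B k) - Q := by
      filter_upwards [hBne] with k hk
      rw [hwstep k, sub_div, mul_div_assoc, mul_div_assoc, div_self hk, mul_one]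
    rw [tendsto_congr' he]
    simpa using (ht0.const_mul (p2 - x*q2)).sub_const Q
  have l2 : Tendsto (fun k => B (k+1) / B k) atTop (nhds lam) := by
    have he : (fun k => B (k+1)/B k) =ᶠ[atTop] fun k => q2 * (w k / B k) + lam := by
      filter_upwards [hBne] with k hk
      have : B (k+1) = q2 * w k + lam * B k := by
        rw [hB k]; simp only [hw, hlam]; ring
      rw [this, add_div, mul_div_assoc, mul_div_assoc, div_self hk, mul_one]
    rw [tendsto_congr' he]
    simpa using (ht0.const_mul q2).add_const lam
  have l3 : Tendsto (fun k => w (k+1) / B k) atTop (nhds 0) := by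
    have hsh : Tendsto (fun k => w (k+1)/B (k+1)) atTop (nhds 0) :=
      ht0.comp (tendsto_add_atTop_nat 1)
    have hBne2 : ∀ᶠ k in atTop, B (k+1) ≠ 0 := (tendsto_add_atTop_nat 1).eventually hBne
    have he : (fun k => w (k+1)/B k) =ᶠ[atTop] fun k => (w (k+1)/B (k+1)) * (B (k+1)/B k) := by
      filter_upwards [hBne2] with k hk2
      rw [div_mul_div_comm, mul_comm (w (k+1)) (B (k+1)), mul_div_mul_left _ _ hk2]
    rw [tendsto_congr' he]
    simpa using hsh.mul l2
  have := tendsto_nhds_unique l1 l3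
  linarith

lemma dynPos {x p1 q1 q2 : ℝ} {A B : ℕ → ℝ}
    (hA : ∀ k, A (k+1) = q1 * A k + p1 * B k)
    (hB : ∀ k, B (k+1) = q2 * A k + q1 * B k)
    (hconv : Tendsto (fun k => A k / B k) atTop (nhds x))
    (hxpos : 0 < x)
    (hB0 : B 0 = 1)
    (hA0 : A 0 ≠ x)
    (hnorm : q1^2 - x^2*q2^2 = -1)
    (hp1 : p1 = x^2 * q2) :
    q1 * q2 > 0 := by
  have hq2 : q2 ≠ 0 := by intro h; rw [h] at hnorm; nlinarith [sq_nonneg q1]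
  set w : ℕ → ℝ := fun k => A k - x * B k with hw
  set mu := q1 - q2*x with hmu
  set lam := q2*x + q1 with hlam
  have hBne : ∀ᶠ k in atTop, B k ≠ 0 := by
    filter_upwards [hconv.eventually (eventually_gt_nhds (half_lt_self hxpos))] with k hk
    intro h0
    rw [h0, div_zero] at hk
    linarith
  have ht0 : Tendsto (fun k => w k / B k) atTop (nhds 0) := by
    have he : (fun k => w k / B k) =ᶠ[atTop] fun k => A k / B k - x := by
      filter_upwards [hBne] with k hk
      simp only [hw]
      field_simp
    rw [tendsto_congr' he]
    simpa using hconv.sub_const x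
  have hwstep : ∀ k, w (k+1) = mu * w k := by
    intro k; simp only [hw, hmu]; rw [hA k, hB k]; linear_combination (B k) * hp1
  have hBstep : ∀ k, B (k+1) = q2 * w k + lam * B k := by
    intro k; rw [hB k]; simp only [hw, hlam]; ring
  have hwk : ∀ k, w k = mu^k * w 0 := by
    intro k; induction k with
    | zero => simp
    | succ k ih => rw [hwstep k, ih, pow_succ]; ring
  have hw0' : w 0 ≠ 0 := by
    simp only [hw, hB0, mul_one]
    intro h
    exact hA0 (by linarith)
  have hmu2 : mu^2 < 1 := by
    by_contra hge
    push_neg at hge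
    have hmune : mu ≠ 0 := by intro h; rw [h] at hge; norm_num at hge
    have hlm : lam * mu = -1 := by simp only [hlam, hmu]; linear_combination hnorm
    have hlmsq : lam^2 * mu^2 = 1 := by rw [← mul_pow, hlm]; norm_num
    have hlamsq : lam^2 ≤ 1 := by
      nlinarith [mul_nonneg (sq_nonneg lam) (by linarith : (0:ℝ) ≤ mu^2 - 1)]
    have hmlne : mu - lam ≠ 0 := by
      simp only [hmu, hlam]
      intro h
      have h2 : q2 * x = 0 := by linarith
      rcases mul_eq_zero.mp h2 with h3 | h3
      · exact hq2 h3
      · exact (ne_of_gt hxpos) h3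
    have hBk : ∀ k, B k = lam^k * B 0 + q2 * w 0 * ((mu^k - lam^k)/(mu - lam)) := by
      intro k; induction k with
      | zero => simp
      | succ k ih =>
        rw [hBstep k, ih, hwk k]
        field_simp
        ring
    have habs : |lam| ≤ |mu| := by
      rw [← Real.sqrt_sq_eq_abs, ← Real.sqrt_sq_eq_abs]
      exact Real.sqrt_le_sqrt (by linarith)
    set M : ℝ := 1 + 2 * |q2 * w 0 / (mu - lam)| with hM
    have hMpos : 0 < M := by positivity
    have hband : ∀ k, |B k| ≤ M * |mu|^k := by
      intro k
      have e1 : B k = lam^k + (q2 * w 0 / (mu - lam)) * (mu^k - lam^k) := by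
        rw [hBk k, hB0]; ring
      have h2 : |lam|^k ≤ |mu|^k := pow_le_pow_left₀ (abs_nonneg _) habs k
      have h3 : |mu^k - lam^k| ≤ |mu|^k + |lam|^k := by
        refine le_trans (abs_sub _ _) ?_
        rw [abs_pow, abs_pow]
      calc |B k| ≤ |lam^k| + |(q2 * w 0 / (mu - lam)) * (mu^k - lam^k)| := by
            rw [e1]; exact abs_add_le _ _
        _ = |lam|^k + |q2 * w 0 / (mu - lam)| * |mu^k - lam^k| := by
            rw [abs_pow, abs_mul]
        _ ≤ |mu|^k + |q2 * w 0 / (mu - lam)| * (|mu|^k + |lam|^k) := by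
            have h4 := mul_le_mul_of_nonneg_left h3 (abs_nonneg (q2 * w 0 / (mu - lam)))
            linarith
        _ ≤ |mu|^k + |q2 * w 0 / (mu - lam)| * (|mu|^k + |mu|^k) := by
            have h5 := mul_le_mul_of_nonneg_left (add_le_add_left h2 (|mu|^k)) (abs_nonneg (q2 * w 0 / (mu - lam)))
            linarith
        _ = M * |mu|^k := by rw [hM]; ring
    have hc : 0 < |w 0| / M := div_pos (abs_pos.mpr hw0') hMpos
    have hev : ∀ᶠ k in atTop, |w k / B k| < |w 0| / M := by
      have habs0 : Tendsto (fun k => |w k / B k|) atTop (nhds 0) := by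
        simpa using ht0.abs
      exact habs0.eventually (eventually_lt_nhds hc)
    obtain ⟨k, hk1, hk2⟩ := (hev.and hBne).exists
    have h1 : |w k| = |mu|^k * |w 0| := by rw [hwk k, abs_mul, abs_pow]
    have hBkpos : 0 < |B k| := abs_pos.mpr hk2
    have hmupow : (0:ℝ) < |mu|^k := pow_pos (abs_pos.mpr hmune) k
    have h4 : |w 0| / M ≤ |w k| / |B k| := by
      rw [h1, div_le_div_iff₀ hMpos hBkpos]
      calc |w 0| * |B k| ≤ |w 0| * (M * |mu|^k) := by
            exact mul_le_mul_of_nonneg_left (hband k) (abs_nonneg _)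
        _ = |mu|^k * |w 0| * M := by ring
    rw [abs_div] at hk1
    linarith
  -- conclude positivity
  rw [hmu] at hmu2
  have h5 : q1 * q2 * x > q1^2 := by nlinarith [hmu2, hnorm]
  by_contra hcon
  push_neg at hcon
  have h6 : q1 * q2 * x ≤ 0 := mul_nonpos_of_nonpos_of_nonneg hcon (le_of_lt hxpos)
  nlinarith [sq_nonneg q1]

theorem stmt7 (n : ℕ) (hn : 1 ≤ n) (a₁ a₂ a₃ : ℝ)
    (ha₁ : a₁ ∈ Algebra.adjoin ℤ ({X (n - 1)} : Set ℝ))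
    (ha₂ : a₂ ∈ Algebra.adjoin ℤ ({X (n - 1)} : Set ℝ))
    (ha₃ : a₃ ∈ Algebra.adjoin ℤ ({X (n - 1)} : Set ℝ))
    (c : ℕ → ℝ) (hc1 : ∀ k, c (3 * k) = a₁) (hc2 : ∀ k, c (3 * k + 1) = a₂)
    (hc3 : ∀ k, c (3 * k + 2) = a₃)
    (hconv : CFConv c (X n)) :
    a₂ ^ 2 - X n ^ 2 * (a₂ * a₃ + 1) ^ 2 = -1 ∧
      a₁ * a₂ + 1 = X n ^ 2 * (a₂ * a₃ + 1) ∧ a₂ * (a₂ * a₃ + 1) > 0 := by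
  obtain ⟨m, rfl⟩ : ∃ m, n = m + 1 := ⟨n - 1, by omega⟩
  simp only [Nat.add_sub_cancel] at ha₁ ha₂ ha₃
  have hx2 : X (m+1) ^ 2 = 2 + X m := X_sq m
  have hxpos : 0 < X (m+1) := X_pos m
  have hdeg : (minpoly ℚ (X m)).natDegree < (minpoly ℚ (X (m+1))).natDegree := by
    refine lt_of_le_of_lt (minpoly_X_le m) (lt_of_lt_of_le ?_ (minpoly_X_ge (m+1)))
    have h1 : (2:ℕ)^(m+1) = 2^m * 2 := by ring
    have h2 : 0 < (2:ℕ)^m := Nat.pow_pos (by norm_num)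
    omega
  have irr : ∀ r s : ℝ, r ∈ Algebra.adjoin ℤ ({X m} : Set ℝ) →
      s ∈ Algebra.adjoin ℤ ({X m} : Set ℝ) → r * X (m+1) = s → r = 0 ∧ s = 0 :=
    fun r s hr hs h => irr_aux (X_integral (m+1)) (X_integral m) hdeg hr hs h
  -- subsequence setup
  set A : ℕ → ℝ := fun k => cfNum c (3 * k + 1) with hAdef
  set B : ℕ → ℝ := fun k => cfDen c (3 * k + 1) with hBdef
  have hstep := cf_step hc1 hc2 hc3
  have hA : ∀ k, A (k+1) = (a₃ * (a₁ * a₂ + 1) + a₁) * A k + (a₁ * a₂ + 1) * B k := by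
    intro k
    show cfNum c (3 * (k+1) + 1) = _ * cfNum c (3*k+1) + _ * cfDen c (3*k+1)
    rw [show 3 * (k+1) + 1 = (3*k+1) + 3 by ring]
    exact (hstep (3*k+1)).1
  have hB : ∀ k, B (k+1) = (a₂ * a₃ + 1) * A k + a₂ * B k := by
    intro k
    show cfDen c (3 * (k+1) + 1) = _ * cfNum c (3*k+1) + _ * cfDen c (3*k+1)
    rw [show 3 * (k+1) + 1 = (3*k+1) + 3 by ring]
    exact (hstep (3*k+1)).2
  have h3k : Filter.Tendsto (fun k : ℕ => 3 * k) Filter.atTop Filter.atTop :=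
    Filter.tendsto_atTop_atTop.mpr (fun b => ⟨b, fun a ha => by omega⟩)
  have hconv' : Filter.Tendsto (fun k => A k / B k) Filter.atTop (nhds (X (m+1))) :=
    hconv.comp h3k
  -- the quadratic equation
  have hQ0 := dynQ hA hB hconv' hxpos
  -- split using irrationality
  have hmemR : ∀ z w : ℝ, z ∈ Algebra.adjoin ℤ ({X m} : Set ℝ) →
      w ∈ Algebra.adjoin ℤ ({X m} : Set ℝ) → True := fun _ _ _ _ => trivial
  have hXmR : X m ∈ Algebra.adjoin ℤ ({X m} : Set ℝ) := Algebra.subset_adjoin rfl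
  have h1R : (1:ℝ) ∈ Algebra.adjoin ℤ ({X m} : Set ℝ) := one_mem _
  have h2R : (2:ℝ) ∈ Algebra.adjoin ℤ ({X m} : Set ℝ) := by
    have := add_mem h1R h1R; rwa [one_add_one_eq_two] at this
  have key := irr (a₂ - (a₃ * (a₁ * a₂ + 1) + a₁))
    ((a₁ * a₂ + 1) - (a₂ * a₃ + 1) * (2 + X m))
    (sub_mem ha₂ (add_mem (mul_mem ha₃ (add_mem (mul_mem ha₁ ha₂) h1R)) ha₁))
    (sub_mem (add_mem (mul_mem ha₁ ha₂) h1R)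
      (mul_mem (add_mem (mul_mem ha₂ ha₃) h1R) (add_mem h2R hXmR)))
    (by linear_combination hQ0 - (a₂ * a₃ + 1) * hx2)
  have h1 : a₂ - (a₃ * (a₁ * a₂ + 1) + a₁) = 0 := key.1
  have h2 : (a₁ * a₂ + 1) - (a₂ * a₃ + 1) * (2 + X m) = 0 := key.2
  have g2 : a₁ * a₂ + 1 = X (m+1) ^ 2 * (a₂ * a₃ + 1) := by
    linear_combination h2 - (a₂ * a₃ + 1) * hx2
  have g1 : a₂ ^ 2 - X (m+1) ^ 2 * (a₂ * a₃ + 1) ^ 2 = -1 := by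
    linear_combination a₂ * h1 + (a₂ * a₃ + 1) * h2 - (a₂ * a₃ + 1)^2 * hx2
  refine ⟨g1, g2, ?_⟩
  -- positivity via dynPos
  have hA' : ∀ k, A (k+1) = a₂ * A k + (a₁ * a₂ + 1) * B k := by
    intro k
    rw [hA k]
    linear_combination (-(A k)) * h1
  have hB0 : B 0 = 1 := rfl
  have hA0ne : A 0 ≠ X (m+1) := by
    have hA0 : A 0 = a₁ := by
      show cfNum c (3 * 0 + 1) = a₁
      have e : cfNum c (3 * 0 + 1) = c 0 := rfl
      rw [e]
      simpa using hc1 0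
    intro h
    have := irr 1 a₁ h1R ha₁ (by rw [one_mul, ← hA0, h])
    norm_num at this
  have hnorm : a₂^2 - (X (m+1))^2 * (a₂ * a₃ + 1)^2 = -1 := g1
  exact dynPos hA' hB hconv' hxpos hB0 hA0ne hnorm (by linear_combination g2)
end

section
/- Let n ≥ 1. Then the real numbers (X_{n-1} + 6)/(X_{n-1} − 2) and 4/(X_{n-1} − 2) lie in the subring ℤ[X_{n-1}] of ℝ, and they satisfy (X_n + 2)/(X_n − 2) = (X_{n-1} + 6)/(X_{n-1} − 2) + X_n·(4/(X_{n-1} − 2)) and ((X_{n-1} + 6)/(X_{n-1} − 2))² − X_n²·(4/(X_{n-1} − 2))² = 1. -/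
lemma hX2 (m : ℕ) : X (m + 1) ^ 2 = 2 + X m := by
  unfold X
  have h : 2 * (2 * Real.pi / 2 ^ (m + 1 + 2)) = 2 * Real.pi / 2 ^ (m + 2) := by
    rw [pow_succ]; ring
  have := Real.cos_sq (2 * Real.pi / 2 ^ (m + 1 + 2))
  rw [h] at this
  nlinarith [this]

lemma hXlt (m : ℕ) : X m < 2 := by
  unfold X
  have h4 : (4 : ℝ) ≤ 2 ^ (m + 2) := by
    calc (4 : ℝ) = 2 ^ 2 := by norm_num
    _ ≤ 2 ^ (m + 2) := by
        apply pow_le_pow_right₀ (by norm_num)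
        omega
  have hpi := Real.pi_pos
  have hle : 2 * Real.pi / 2 ^ (m + 2) ≤ 2 * Real.pi / 4 := by gcongr <;> linarith
  have hpos : 0 < 2 * Real.pi / 2 ^ (m + 2) := by positivity
  have := Real.cos_lt_cos_of_nonneg_of_le_pi (le_refl 0)
    (by linarith : 2 * Real.pi / 2 ^ (m + 2) ≤ Real.pi) hpos
  rw [Real.cos_zero] at this
  linarith

lemma two_mem_adjoin (s : Set ℝ) : (2 : ℝ) ∈ Algebra.adjoin ℤ s := by
  simpa using intCast_mem (Algebra.adjoin ℤ s) 2

lemma mem4 : ∀ m, 4 / (X m - 2) ∈ Algebra.adjoin ℤ ({X m} : Set ℝ) := by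
  intro m
  induction m with
  | zero =>
    have h0 : X 0 = 0 := by
      unfold X
      norm_num
      rw [show 2 * Real.pi / 4 = Real.pi / 2 by ring, Real.cos_pi_div_two]
    rw [h0]
    norm_num
  | succ m ih =>
    have hx := hX2 m
    have hxm : X m ∈ Algebra.adjoin ℤ ({X (m+1)} : Set ℝ) := by
      have h : X m = X (m+1) ^ 2 - 2 := by linarith
      rw [h]
      exact sub_mem (pow_mem (Algebra.self_mem_adjoin_singleton ℤ _) 2) (two_mem_adjoin _)
    have hle : Algebra.adjoin ℤ ({X m} : Set ℝ) ≤ Algebra.adjoin ℤ ({X (m+1)} : Set ℝ) :=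
      Algebra.adjoin_le (by simpa using hxm)
    have hne1 : X m - 2 ≠ 0 := sub_ne_zero.mpr (ne_of_lt (hXlt m))
    have hne2 : X (m+1) - 2 ≠ 0 := sub_ne_zero.mpr (ne_of_lt (hXlt (m+1)))
    have key : 4 / (X (m+1) - 2) = (X (m+1) + 2) * (4 / (X m - 2)) := by
      field_simp
      linear_combination (-1 : ℝ) * hx
    rw [key]
    exact mul_mem (add_mem (Algebra.self_mem_adjoin_singleton ℤ _) (two_mem_adjoin _)) (hle ih)

theorem stmt11 (n : ℕ) (hn : 1 ≤ n) :
    (X (n - 1) + 6) / (X (n - 1) - 2) ∈ Algebra.adjoin ℤ ({X (n - 1)} : Set ℝ) ∧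
    4 / (X (n - 1) - 2) ∈ Algebra.adjoin ℤ ({X (n - 1)} : Set ℝ) ∧
    (X n + 2) / (X n - 2)
      = (X (n - 1) + 6) / (X (n - 1) - 2) + X n * (4 / (X (n - 1) - 2)) ∧
    ((X (n - 1) + 6) / (X (n - 1) - 2)) ^ 2 - X n ^ 2 * (4 / (X (n - 1) - 2)) ^ 2 = 1 := by
  obtain ⟨m, rfl⟩ : ∃ m, n = m + 1 := ⟨n - 1, by omega⟩
  simp only [Nat.add_sub_cancel]
  have hx := hX2 m
  have hne1 : X m - 2 ≠ 0 := sub_ne_zero.mpr (ne_of_lt (hXlt m))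
  have hne2 : X (m+1) - 2 ≠ 0 := sub_ne_zero.mpr (ne_of_lt (hXlt (m+1)))
  have h4 := mem4 m
  refine ⟨?_, h4, ?_, ?_⟩
  · have key : (X m + 6) / (X m - 2) = 1 + 2 * (4 / (X m - 2)) := by
      field_simp
      ring
    rw [key]
    exact add_mem (one_mem _) (mul_mem (two_mem_adjoin _) h4)
  · field_simp
    linear_combination (-4 : ℝ) * hx
  · field_simp
    linear_combination (-16 : ℝ) * hx
end
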